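/- arXiv:1301.5942 — 2 statements merged into one kernel-verified Lean document; each statement's English description precedes it below -/
import Mathlib

section
/- Let p be any probability distribution on {1,...,M_x} × {1,...,M_y}, let α ∈ (0,1], and let p̂_n be the empirical distribution of an i.i.d. sample of size n from p, with marginals p̂_{n,X} and p̂_{n,Y}. Set ε = sqrt((2/n)·ln((2^{M_x·M_y} − 2)/α)) and define I_min = min{H(r) : V(p̂_{n,X}, r) ≤ ε} + min{H(r) : V(p̂_{n,Y}, r) ≤ ε} − max{H(s) : V(p̂_n, s) ≤ ε} and I_max = max{H(r) : V(p̂_{n,X}, r) ≤ ε} + max{H(r) : V(p̂_{n,Y}, r) ≤ ε} − min{H(s) : V(p̂_n, s) ≤ ε}, where the optimizations over r range over probability distributions on {1,...,M_x} (respectively {1,...,M_y}) and those over s range over probability distributions on {1,...,M_x} × {1,...,M_y}. Then Pr{ I_min ≤ I(p) ≤ I_max } ≥ 1 − α, where I denotes mutual information. -/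
open scoped BigOperators
open MeasureTheory

/-- `p` is a probability distribution on the finite type `α`. -/
def IsDist {α : Type*} [Fintype α] (p : α → ℝ) : Prop :=
  (∀ a, 0 ≤ p a) ∧ ∑ a, p a = 1

/-- Shannon entropy (natural logarithm, with `0 · log 0 = 0`). -/
noncomputable def entropy {α : Type*} [Fintype α] (p : α → ℝ) : ℝ :=
  -∑ a, p a * Real.log (p a)

/-- Variational distance between two distributions on the same finite set. -/
noncomputable def Vdist {α : Type*} [Fintype α] (p q : α → ℝ) : ℝ :=
  ∑ a, |p a - q a|

/-- First marginal of a joint distribution. -/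
noncomputable def margX {Mx My : ℕ} (p : Fin Mx × Fin My → ℝ) : Fin Mx → ℝ :=
  fun i => ∑ j, p (i, j)

/-- Second marginal of a joint distribution. -/
noncomputable def margY {Mx My : ℕ} (p : Fin Mx × Fin My → ℝ) : Fin My → ℝ :=
  fun j => ∑ i, p (i, j)

/-- Mutual information of a joint distribution. -/
noncomputable def mutInfo {Mx My : ℕ} (p : Fin Mx × Fin My → ℝ) : ℝ :=
  entropy (margX p) + entropy (margY p) - entropy p

/-- Binary entropy function. -/
noncomputable def binEnt (x : ℝ) : ℝ :=
  -x * Real.log x - (1 - x) * Real.log (1 - x)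

/-- The measure on a finite type induced by a (real-valued) distribution `p`. -/
noncomputable def distMeasure {α : Type*} [Fintype α] [MeasurableSpace α]
    (p : α → ℝ) : Measure α :=
  ∑ a : α, ENNReal.ofReal (p a) • Measure.dirac a

/-- The empirical distribution of the sample `Z 0 ω, …, Z (n-1) ω`. -/
noncomputable def empDist {α : Type*} [Fintype α] [DecidableEq α] {Ω : Type*} {n : ℕ}
    (Z : Fin n → Ω → α) (ω : Ω) : α → ℝ :=
  fun a => ((Finset.univ.filter fun k => Z k ω = a).card : ℝ) / n


section Aux

open Real

/- ### Entropy and distribution lemmas -/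

lemma isDist_le_one {α : Type*} [Fintype α] {p : α → ℝ} (hp : IsDist p) (a : α) : p a ≤ 1 := by
  rw [← hp.2]
  exact Finset.single_le_sum (fun b _ => hp.1 b) (Finset.mem_univ a)

lemma entropy_nonneg' {α : Type*} [Fintype α] {p : α → ℝ} (hp : IsDist p) : 0 ≤ entropy p := by
  rw [entropy, neg_nonneg]
  apply Finset.sum_nonpos
  intro a _
  exact mul_nonpos_of_nonneg_of_nonpos (hp.1 a)
    (Real.log_nonpos (hp.1 a) (isDist_le_one hp a))

lemma entropy_le_card {α : Type*} [Fintype α] {p : α → ℝ} (hp : IsDist p) :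
    entropy p ≤ (Fintype.card α : ℝ) := by
  rw [entropy, neg_le]
  calc (-(Fintype.card α : ℝ)) = ∑ _a : α, (-1 : ℝ) := by simp
    _ ≤ ∑ a, p a * Real.log (p a) := by
        apply Finset.sum_le_sum
        intro a _
        rcases eq_or_lt_of_le (hp.1 a) with h | h
        · simp [← h]
        · have hlog : Real.log (p a)⁻¹ ≤ (p a)⁻¹ - 1 :=
            Real.log_le_sub_one_of_pos (inv_pos.mpr h)
          have : -(p a * Real.log (p a)) = p a * Real.log (p a)⁻¹ := by
            rw [Real.log_inv]; ring
          nlinarith [mul_le_mul_of_nonneg_left hlog (hp.1 a),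
            mul_inv_cancel₀ h.ne']

lemma isDist_margX {Mx My : ℕ} {p : Fin Mx × Fin My → ℝ} (hp : IsDist p) : IsDist (margX p) :=
  ⟨fun i => Finset.sum_nonneg fun j _ => hp.1 _, by
    simp only [margX]
    rw [← hp.2, Fintype.sum_prod_type]⟩

lemma isDist_margY {Mx My : ℕ} {p : Fin Mx × Fin My → ℝ} (hp : IsDist p) : IsDist (margY p) :=
  ⟨fun j => Finset.sum_nonneg fun i _ => hp.1 _, by
    simp only [margY]
    rw [← hp.2, Fintype.sum_prod_type, Finset.sum_comm]⟩

lemma Vdist_margX_le {Mx My : ℕ} (p q : Fin Mx × Fin My → ℝ) :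
    Vdist (margX p) (margX q) ≤ Vdist p q := by
  rw [Vdist, Vdist, Fintype.sum_prod_type]
  apply Finset.sum_le_sum
  intro i _
  rw [margX, margX, ← Finset.sum_sub_distrib]
  exact Finset.abs_sum_le_sum_abs _ _

lemma Vdist_margY_le {Mx My : ℕ} (p q : Fin Mx × Fin My → ℝ) :
    Vdist (margY p) (margY q) ≤ Vdist p q := by
  rw [Vdist, Vdist, Fintype.sum_prod_type, Finset.sum_comm]
  apply Finset.sum_le_sum
  intro j _
  rw [margY, margY, ← Finset.sum_sub_distrib]
  exact Finset.abs_sum_le_sum_abs _ _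

lemma entSet_bddBelow {α : Type*} [Fintype α] (ph : α → ℝ) (ε : ℝ) :
    BddBelow {x : ℝ | ∃ r : α → ℝ, IsDist r ∧ Vdist ph r ≤ ε ∧ x = entropy r} := by
  refine ⟨0, fun x hx => ?_⟩
  obtain ⟨r, hr, _, rfl⟩ := hx
  exact entropy_nonneg' hr

lemma entSet_bddAbove {α : Type*} [Fintype α] (ph : α → ℝ) (ε : ℝ) :
    BddAbove {x : ℝ | ∃ r : α → ℝ, IsDist r ∧ Vdist ph r ≤ ε ∧ x = entropy r} := by
  refine ⟨(Fintype.card α : ℝ), fun x hx => ?_⟩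
  obtain ⟨r, hr, _, rfl⟩ := hx
  exact entropy_le_card hr

lemma csInf_entSet_le {α : Type*} [Fintype α] {ph r : α → ℝ} {ε : ℝ}
    (hr : IsDist r) (hV : Vdist ph r ≤ ε) :
    sInf {x : ℝ | ∃ r : α → ℝ, IsDist r ∧ Vdist ph r ≤ ε ∧ x = entropy r} ≤ entropy r :=
  csInf_le (entSet_bddBelow ph ε) ⟨r, hr, hV, rfl⟩

lemma le_csSup_entSet {α : Type*} [Fintype α] {ph r : α → ℝ} {ε : ℝ}
    (hr : IsDist r) (hV : Vdist ph r ≤ ε) :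
    entropy r ≤ sSup {x : ℝ | ∃ r : α → ℝ, IsDist r ∧ Vdist ph r ≤ ε ∧ x = entropy r} :=
  le_csSup (entSet_bddAbove ph ε) ⟨r, hr, hV, rfl⟩

/- ### Hoeffding's lemma for indicator (Bernoulli) variables -/

lemma den_pos' {q : ℝ} (h0 : 0 ≤ q) (h1 : q ≤ 1) (s : ℝ) : 0 < 1 - q + q * exp s := by
  rcases eq_or_lt_of_le h1 with h | h
  · subst h; simpa using exp_pos s
  · have : 0 ≤ q * exp s := mul_nonneg h0 (exp_pos s).le
    linarith

lemma bernoulli_hoeffding {q : ℝ} (h0 : 0 ≤ q) (h1 : q ≤ 1) (s : ℝ) :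
    1 - q + q * exp s ≤ exp (q * s + s ^ 2 / 8) := by
  -- u s = q e^s / (1 - q + q e^s)
  set u : ℝ → ℝ := fun s => q * exp s / (1 - q + q * exp s) with hu_def
  have hden := den_pos' h0 h1
  have hu_mem : ∀ s, 0 ≤ u s ∧ u s ≤ 1 := by
    intro s
    constructor
    · exact div_nonneg (mul_nonneg h0 (exp_pos s).le) (hden s).le
    · rw [div_le_one (hden s)]; linarith
  have hu_deriv : ∀ s, HasDerivAt u (u s * (1 - u s)) s := by
    intro s
    have h1' : HasDerivAt (fun s => q * exp s) (q * exp s) s := (hasDerivAt_exp s).const_mul q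
    have h2' : HasDerivAt (fun s => 1 - q + q * exp s) (q * exp s) s := by
      simpa using h1'.const_add (1 - q)
    have := h1'.div h2' (hden s).ne'
    refine HasDerivAt.congr_deriv this ?_; symm
    have hd : (1 - q + q * exp s) ≠ 0 := (hden s).ne'
    have hd2 : ((1 - q + q * exp s) ^ 2) ≠ 0 := pow_ne_zero _ hd
    rw [eq_div_iff hd2, hu_def]
    field_simp
  -- ψ s = q + s/4 - u s, derivative 1/4 - u(1-u) ≥ 0, ψ 0 = 0
  set ψ : ℝ → ℝ := fun s => q + s / 4 - u s with hψ_def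
  have hψ_deriv : ∀ s, HasDerivAt ψ (1 / 4 - u s * (1 - u s)) s := by
    intro s
    have : HasDerivAt (fun s : ℝ => q + s / 4) (1 / 4) s := by
      simpa using ((hasDerivAt_id s).div_const 4).const_add q
    exact this.sub (hu_deriv s)
  have hψ_deriv_nonneg : ∀ s, 0 ≤ 1 / 4 - u s * (1 - u s) := by
    intro s
    have h := hu_mem s
    nlinarith [sq_nonneg (u s - 1/2)]
  have hψ_mono : Monotone ψ := by
    have : ∀ s, 0 ≤ deriv ψ s := fun s => (hψ_deriv s).deriv ▸ hψ_deriv_nonneg s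
    exact monotone_of_deriv_nonneg (fun s => (hψ_deriv s).differentiableAt) this
  have hψ0 : ψ 0 = 0 := by simp [hψ_def, hu_def]
  -- φ s = q s + s²/8 - log(1-q+q e^s), derivative ψ s, φ 0 = 0
  set φ : ℝ → ℝ := fun s => q * s + s ^ 2 / 8 - Real.log (1 - q + q * exp s) with hφ_def
  have hφ_deriv : ∀ s, HasDerivAt φ (ψ s) s := by
    intro s
    have h1' : HasDerivAt (fun s => 1 - q + q * exp s) (q * exp s) s := by
      simpa using ((hasDerivAt_exp s).const_mul q).const_add (1 - q)
    have hlog : HasDerivAt (fun s => Real.log (1 - q + q * exp s))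
        (q * exp s / (1 - q + q * exp s)) s := h1'.log (hden s).ne'
    have hpoly : HasDerivAt (fun s : ℝ => q * s + s ^ 2 / 8) (q + s / 4) s := by
      have h1'' : HasDerivAt (fun s : ℝ => q * s) q s := by
        simpa using (hasDerivAt_id s).const_mul q
      have h2'' : HasDerivAt (fun s : ℝ => s ^ 2 / 8) (s / 4) s := by
        have := (hasDerivAt_pow 2 s).div_const 8
        refine this.congr_deriv ?_; norm_num; ring
      exact h1''.add h2''
    have := hpoly.sub hlog
    exact this
  have hφ0 : φ 0 = 0 := by simp [hφ_def]
  have hφ_cont : Continuous φ := Differentiable.continuous (fun x => (hφ_deriv x).differentiableAt)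
  have hφ_nonneg : ∀ s, 0 ≤ φ s := by
    intro s
    rcases le_total 0 s with hs | hs
    · have hmono : MonotoneOn φ (Set.Ici 0) := by
        apply monotoneOn_of_deriv_nonneg (convex_Ici 0) hφ_cont.continuousOn
        · intro x _; exact (hφ_deriv x).differentiableAt.differentiableWithinAt
        · intro x hx
          rw [(hφ_deriv x).deriv]
          have hx' : (0:ℝ) ≤ x := Set.mem_Ici.mp (interior_subset hx)
          have : ψ 0 ≤ ψ x := hψ_mono hx'
          linarith [hψ0 ▸ this]
      have := hmono (Set.self_mem_Ici) hs hs
      linarith [hφ0 ▸ this]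
    · have hanti : AntitoneOn φ (Set.Iic 0) := by
        apply antitoneOn_of_deriv_nonpos (convex_Iic 0) hφ_cont.continuousOn
        · intro x _; exact (hφ_deriv x).differentiableAt.differentiableWithinAt
        · intro x hx
          rw [(hφ_deriv x).deriv]
          have hx' : x ≤ (0:ℝ) := Set.mem_Iic.mp (interior_subset hx)
          have : ψ x ≤ ψ 0 := hψ_mono hx'
          linarith [hψ0 ▸ this]
      have := hanti hs Set.self_mem_Iic hs
      linarith [hφ0 ▸ this]
  have := hφ_nonneg s
  have hlog_le : Real.log (1 - q + q * exp s) ≤ q * s + s ^ 2 / 8 := by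
    simp only [hφ_def] at this; linarith
  calc 1 - q + q * exp s = exp (Real.log (1 - q + q * exp s)) := (exp_log (hden s)).symm
    _ ≤ exp (q * s + s ^ 2 / 8) := exp_le_exp.mpr hlog_le

section Probabilistic

variable {γ : Type*} [Fintype γ] [DecidableEq γ] [MeasurableSpace γ] [MeasurableSingletonClass γ]

set_option linter.unusedSectionVars false

lemma distMeasure_apply {p : γ → ℝ} (hp0 : ∀ a, 0 ≤ p a) (A : Finset γ) :
    distMeasure p (↑A) = ENNReal.ofReal (∑ a ∈ A, p a) := by
  have hA : MeasurableSet (↑A : Set γ) := (A.finite_toSet.countable).measurableSet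
  rw [distMeasure, Measure.finset_sum_apply]
  calc ∑ i : γ, (ENNReal.ofReal (p i) • Measure.dirac i) ↑A
      = ∑ i : γ, if i ∈ A then ENNReal.ofReal (p i) else 0 := by
        refine Finset.sum_congr rfl fun i _ => ?_
        rw [Measure.smul_apply, Measure.dirac_apply' _ hA, smul_eq_mul]
        by_cases h : i ∈ A
        · simp [Set.indicator_of_mem (Finset.mem_coe.mpr h), h]
        · simp [Set.indicator_of_notMem (fun hc => h (Finset.mem_coe.mp hc)), h]
    _ = ∑ i ∈ A, ENNReal.ofReal (p i) := by rw [Finset.sum_ite_mem, Finset.univ_inter]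
    _ = ENNReal.ofReal (∑ a ∈ A, p a) := (ENNReal.ofReal_sum_of_nonneg fun a _ => hp0 a).symm

lemma mgf_indicator {Ω : Type*} [MeasurableSpace Ω] {μ : Measure Ω} [IsProbabilityMeasure μ]
    {p : γ → ℝ} (hp0 : ∀ a, 0 ≤ p a) {Z : Ω → γ} (hm : Measurable Z)
    (hd : Measure.map Z μ = distMeasure p) (A : Finset γ) (t : ℝ) :
    ProbabilityTheory.mgf (fun ω => if Z ω ∈ A then (1:ℝ) else 0) μ t
      = 1 - (∑ a ∈ A, p a) + (∑ a ∈ A, p a) * exp t := by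
  set q := ∑ a ∈ A, p a with hq
  have hA : MeasurableSet (↑A : Set γ) := (A.finite_toSet.countable).measurableSet
  have hpre : MeasurableSet (Z ⁻¹' ↑A) := hm hA
  have hfun : (fun ω => exp (t * (if Z ω ∈ A then (1:ℝ) else 0)))
      = fun ω => (Z ⁻¹' ↑A).indicator (fun _ => exp t - 1) ω + 1 := by
    funext ω
    by_cases h : Z ω ∈ A
    · rw [Set.indicator_of_mem (by simpa using h)]; simp [h]
    · rw [Set.indicator_of_notMem (by simpa using h)]; simp [h]
  have hμA : μ (Z ⁻¹' ↑A) = ENNReal.ofReal q := by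
    rw [← Measure.map_apply hm hA, hd, distMeasure_apply hp0]
  rw [ProbabilityTheory.mgf, hfun]
  rw [integral_add ((integrable_const (exp t - 1)).indicator hpre) (integrable_const 1)]
  rw [integral_indicator_const _ hpre, integral_const, measureReal_def, hμA,
    ENNReal.toReal_ofReal (Finset.sum_nonneg fun a _ => hp0 a), measureReal_def]
  simp only [measure_univ, ENNReal.toReal_one, smul_eq_mul, one_smul]
  ring

lemma tail_bound {Ω : Type*} [MeasurableSpace Ω] {μ : Measure Ω} [IsProbabilityMeasure μ]
    {n : ℕ} {Z : Fin n → Ω → γ} (hmeas : ∀ k, Measurable (Z k))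
    (hindep : ProbabilityTheory.iIndepFun Z μ)
    {p : γ → ℝ} (hp0 : ∀ a, 0 ≤ p a)
    (hdist : ∀ k, Measure.map (Z k) μ = distMeasure p)
    (A : Finset γ) (hq1 : ∑ a ∈ A, p a ≤ 1) {ε : ℝ} (hε0 : 0 ≤ ε) :
    (μ {ω | (n:ℝ) * ((∑ a ∈ A, p a) + ε/2) ≤ ∑ k, (if Z k ω ∈ A then (1:ℝ) else 0)}).toReal
      ≤ exp (-(n:ℝ) * ε^2 / 2) := by
  set q := ∑ a ∈ A, p a with hq
  have hq0 : 0 ≤ q := Finset.sum_nonneg fun a _ => hp0 a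
  set g : γ → ℝ := fun x => if x ∈ A then 1 else 0 with hg
  set Y : Fin n → Ω → ℝ := fun k => g ∘ Z k with hY
  set t := 2 * ε with ht
  have ht0 : 0 ≤ t := by positivity
  have hgm : Measurable g := measurable_of_countable g
  have hYmeas : ∀ k, Measurable (Y k) := fun k => hgm.comp (hmeas k)
  have hYindep : ProbabilityTheory.iIndepFun Y μ :=
    hindep.comp (fun _ => g) (fun _ => hgm)
  have hYint : ∀ k, Integrable (fun ω => exp (t * Y k ω)) μ := by
    intro k
    refine Integrable.mono' (integrable_const (exp |t|))
      (((hYmeas k).const_mul t).exp.aestronglyMeasurable) (ae_of_all _ fun ω => ?_)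
    rw [Real.norm_eq_abs, abs_exp]
    apply exp_le_exp.mpr
    simp only [hY, hg, Function.comp_apply]
    by_cases h : Z k ω ∈ A <;> simp [h, le_abs_self, abs_nonneg]
  have hmgf : ∀ k, ProbabilityTheory.mgf (Y k) μ t = 1 - q + q * exp t := fun k =>
    mgf_indicator hp0 (hmeas k) (hdist k) A t
  have hint_sum : Integrable (fun ω => exp (t * (∑ k, Y k) ω)) μ :=
    hYindep.integrable_exp_mul_sum hYmeas (fun i _ => hYint i)
  have hcher := ProbabilityTheory.measure_ge_le_exp_mul_mgf
    (μ := μ) (X := ∑ k, Y k) ((n:ℝ) * (q + ε/2)) ht0 hint_sum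
  have hmgfsum : ProbabilityTheory.mgf (∑ k, Y k) μ t = (1 - q + q * exp t) ^ n := by
    rw [hYindep.mgf_sum hYmeas]
    simp [hmgf]
  have hset : {ω | (n:ℝ) * (q + ε/2) ≤ ∑ k, (if Z k ω ∈ A then (1:ℝ) else 0)}
      = {ω | (n:ℝ) * (q + ε/2) ≤ (∑ k, Y k) ω} := by
    ext ω; simp [hY, hg, Finset.sum_apply]
  rw [hset]
  refine hcher.trans ?_
  rw [hmgfsum]
  calc exp (-t * ((n:ℝ) * (q + ε/2))) * (1 - q + q * exp t) ^ n
      ≤ exp (-t * ((n:ℝ) * (q + ε/2))) * exp (q * t + t ^ 2 / 8) ^ n := by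
        apply mul_le_mul_of_nonneg_left _ (exp_pos _).le
        exact pow_le_pow_left₀ (den_pos' hq0 hq1 t).le (bernoulli_hoeffding hq0 hq1 t) n
    _ = exp (-t * ((n:ℝ) * (q + ε/2)) + (n:ℝ) * (q * t + t ^ 2 / 8)) := by
        rw [← exp_nat_mul, ← exp_add]
    _ = exp (-(n:ℝ) * ε^2 / 2) := by
        congr 1
        rw [ht]; ring

lemma sum_empDist {Ω : Type*} {n : ℕ} (Z : Fin n → Ω → γ) (ω : Ω) (A : Finset γ) :
    ∑ a ∈ A, empDist Z ω a = (∑ k, if Z k ω ∈ A then (1:ℝ) else 0) / n := by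
  simp only [empDist]
  rw [← Finset.sum_div]
  congr 1
  have h1 : ∀ a : γ, ((Finset.univ.filter fun k => Z k ω = a).card : ℝ)
      = ∑ k, if Z k ω = a then (1:ℝ) else 0 := by
    intro a
    rw [Finset.card_filter]
    push_cast
    rfl
  rw [Finset.sum_congr rfl fun a _ => h1 a, Finset.sum_comm]
  exact Finset.sum_congr rfl fun k _ => Finset.sum_ite_eq A (Z k ω) (fun _ => (1:ℝ))

lemma sum_empDist_univ {Ω : Type*} {n : ℕ} (hn : 0 < n) (Z : Fin n → Ω → γ) (ω : Ω) :
    ∑ a, empDist Z ω a = 1 := by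
  rw [sum_empDist Z ω Finset.univ]
  simp [Finset.sum_const, Finset.card_univ]
  omega

lemma bad_bound {Ω : Type*} [MeasurableSpace Ω] {μ : Measure Ω} [IsProbabilityMeasure μ]
    {n : ℕ} (hn : 0 < n) {Z : Fin n → Ω → γ} (hmeas : ∀ k, Measurable (Z k))
    (hindep : ProbabilityTheory.iIndepFun Z μ)
    {p : γ → ℝ} (hp0 : ∀ a, 0 ≤ p a) (hp1 : ∑ a, p a = 1)
    (hdist : ∀ k, Measure.map (Z k) μ = distMeasure p)
    {ε : ℝ} (hε0 : 0 ≤ ε) (h2 : 1 < Fintype.card γ) :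
    (μ {ω | ε < Vdist (empDist Z ω) p}).toReal
      ≤ ((2 ^ (Fintype.card γ) - 2 : ℕ) : ℝ) * Real.exp (-(n:ℝ) * ε^2 / 2) := by
  have hne : Nonempty γ := Fintype.card_pos_iff.mp (by omega)
  set B : Finset γ → Set Ω := fun A =>
    {ω | (n:ℝ) * ((∑ a ∈ A, p a) + ε/2) ≤ ∑ k, (if Z k ω ∈ A then (1:ℝ) else 0)} with hB
  set S : Finset (Finset γ) := (Finset.univ.powerset.erase ∅).erase Finset.univ with hS
  have hScard : S.card = 2 ^ (Fintype.card γ) - 2 := by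
    have hmem1 : (∅ : Finset γ) ∈ (Finset.univ : Finset γ).powerset :=
      Finset.mem_powerset.mpr (Finset.empty_subset _)
    have hmem2 : (Finset.univ : Finset γ) ∈ (Finset.univ : Finset γ).powerset.erase ∅ :=
      Finset.mem_erase.mpr ⟨Finset.univ_nonempty.ne_empty,
        Finset.mem_powerset.mpr (Finset.Subset.refl _)⟩
    rw [hS, Finset.card_erase_of_mem hmem2, Finset.card_erase_of_mem hmem1,
      Finset.card_powerset, Finset.card_univ]
    omega
  have hsub : {ω | ε < Vdist (empDist Z ω) p} ⊆ ⋃ A ∈ S, B A := by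
    intro ω hω
    simp only [Set.mem_setOf_eq] at hω
    set d : γ → ℝ := fun a => empDist Z ω a - p a with hd
    have hsum_d : ∑ a, d a = 0 := by
      rw [hd]
      rw [Finset.sum_sub_distrib, hp1, sum_empDist_univ hn Z ω]
      ring
    set A : Finset γ := Finset.univ.filter (fun a => p a < empDist Z ω a) with hA
    have hAd : 2 * ∑ a ∈ A, d a = Vdist (empDist Z ω) p := by
      have hsplit := Finset.sum_filter_add_sum_filter_not Finset.univ
        (fun a => p a < empDist Z ω a) (fun a => |d a|)
      have e1 : ∑ a ∈ Finset.univ.filter (fun a => p a < empDist Z ω a), |d a|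
          = ∑ a ∈ A, d a :=
        Finset.sum_congr rfl fun a ha => abs_of_pos (by
          simp only [hA, Finset.mem_filter] at ha; simp [hd]; linarith [ha.2])
      have e2 : ∑ a ∈ Finset.univ.filter (fun a => ¬ p a < empDist Z ω a), |d a|
          = -∑ a ∈ Finset.univ.filter (fun a => ¬ p a < empDist Z ω a), d a := by
        rw [← Finset.sum_neg_distrib]
        refine Finset.sum_congr rfl fun a ha => abs_of_nonpos (by
          simp only [Finset.mem_filter] at ha; simp [hd]; linarith [ha.2])
      have e3 : ∑ a ∈ A, d a + ∑ a ∈ Finset.univ.filter (fun a => ¬ p a < empDist Z ω a), d a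
          = 0 := by
        rw [← hsum_d, hA]
        exact Finset.sum_filter_add_sum_filter_not _ _ _
      rw [Vdist, ← hsplit, e1, e2]
      have : ∀ a, |empDist Z ω a - p a| = |d a| := fun a => rfl
      simp only [← this] at *
      linarith
    have hAgt : ε / 2 < ∑ a ∈ A, d a := by
      have : ε < 2 * ∑ a ∈ A, d a := hAd ▸ hω
      linarith
    have hA_ne : A ≠ ∅ := by
      intro h
      rw [h, Finset.sum_empty] at hAgt
      linarith
    have hA_nu : A ≠ Finset.univ := by
      intro h
      rw [h, hsum_d] at hAgt
      linarith
    refine Set.mem_biUnion (show A ∈ S from ?_) ?_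
    · exact Finset.mem_erase.mpr ⟨hA_nu, Finset.mem_erase.mpr
        ⟨hA_ne, Finset.mem_powerset.mpr (Finset.subset_univ A)⟩⟩
    · show (n:ℝ) * ((∑ a ∈ A, p a) + ε/2) ≤ ∑ k, (if Z k ω ∈ A then (1:ℝ) else 0)
      have hEA : ∑ a ∈ A, empDist Z ω a
          = (∑ k, if Z k ω ∈ A then (1:ℝ) else 0) / n := sum_empDist Z ω A
      have hdd : ∑ a ∈ A, empDist Z ω a = (∑ a ∈ A, p a) + ∑ a ∈ A, d a := by
        rw [hd, Finset.sum_sub_distrib]; ring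
      have hnn : (0:ℝ) < n := Nat.cast_pos.mpr hn
      rw [hEA] at hdd
      rw [div_eq_iff hnn.ne'] at hdd
      nlinarith [hAgt]
  calc (μ {ω | ε < Vdist (empDist Z ω) p}).toReal
      ≤ (μ (⋃ A ∈ S, B A)).toReal := by
        apply ENNReal.toReal_le_toReal (measure_ne_top _ _) (measure_ne_top _ _) |>.mpr
        exact measure_mono hsub
    _ ≤ (∑ A ∈ S, μ (B A)).toReal := by
        apply ENNReal.toReal_le_toReal (measure_ne_top _ _)
          (by exact (ENNReal.sum_lt_top.mpr fun A _ => measure_lt_top μ _).ne) |>.mpr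
        exact measure_biUnion_finset_le S B
    _ = ∑ A ∈ S, (μ (B A)).toReal := ENNReal.toReal_sum fun A _ => measure_ne_top _ _
    _ ≤ ∑ A ∈ S, Real.exp (-(n:ℝ) * ε^2 / 2) := by
        refine Finset.sum_le_sum fun A _ => ?_
        refine tail_bound hmeas hindep hp0 hdist A ?_ hε0
        rw [← hp1]
        exact Finset.sum_le_sum_of_subset_of_nonneg (Finset.subset_univ A)
          (fun a _ _ => hp0 a)
    _ = ((2 ^ (Fintype.card γ) - 2 : ℕ) : ℝ) * Real.exp (-(n:ℝ) * ε^2 / 2) := by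
        rw [Finset.sum_const, hScard, nsmul_eq_mul]

end Probabilistic

end Aux

/-- Theorem 4: improved confidence interval via entropy optimization.
With `ε = sqrt((2/n)·ln((2^(Mx·My)-2)/α))` and the (sample-dependent) bounds
`I_min`, `I_max` obtained by optimizing entropies over `ε`-neighborhoods (in variational
distance) of the empirical marginals and the empirical joint distribution, the interval
`[I_min, I_max]` contains `I(p)` with probability at least `1 - α`. -/
theorem mutInfo_confidence_interval_optimized {Mx My : ℕ}
    (p : Fin Mx × Fin My → ℝ) (hp : IsDist p)
    (α : ℝ) (hα : α ∈ Set.Ioc (0 : ℝ) 1)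
    {Ω : Type*} [MeasurableSpace Ω] (μ : Measure Ω) [IsProbabilityMeasure μ]
    {n : ℕ} (hn : 0 < n) (Z : Fin n → Ω → Fin Mx × Fin My)
    (hmeas : ∀ k, Measurable (Z k))
    (hindep : ProbabilityTheory.iIndepFun Z μ)
    (hdist : ∀ k, Measure.map (Z k) μ = distMeasure p)
    (ε : ℝ) (hε : ε = Real.sqrt (2 / (n : ℝ) * Real.log (((2 : ℝ) ^ (Mx * My) - 2) / α))) :
    (μ {ω |
      (sInf {x : ℝ | ∃ r : Fin Mx → ℝ,
          IsDist r ∧ Vdist (margX (empDist Z ω)) r ≤ ε ∧ x = entropy r} +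
        sInf {x : ℝ | ∃ r : Fin My → ℝ,
          IsDist r ∧ Vdist (margY (empDist Z ω)) r ≤ ε ∧ x = entropy r} -
        sSup {x : ℝ | ∃ s : Fin Mx × Fin My → ℝ,
          IsDist s ∧ Vdist (empDist Z ω) s ≤ ε ∧ x = entropy s} ≤ mutInfo p) ∧
      (mutInfo p ≤
        sSup {x : ℝ | ∃ r : Fin Mx → ℝ,
          IsDist r ∧ Vdist (margX (empDist Z ω)) r ≤ ε ∧ x = entropy r} +
        sSup {x : ℝ | ∃ r : Fin My → ℝ,
          IsDist r ∧ Vdist (margY (empDist Z ω)) r ≤ ε ∧ x = entropy r} -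
        sInf {x : ℝ | ∃ s : Fin Mx × Fin My → ℝ,
          IsDist s ∧ Vdist (empDist Z ω) s ≤ ε ∧ x = entropy s})}).toReal ≥ 1 - α := by
  obtain ⟨hα0, hα1⟩ := hα
  have hε0 : 0 ≤ ε := hε ▸ Real.sqrt_nonneg _
  have hcard : Fintype.card (Fin Mx × Fin My) = Mx * My := by simp
  have hM0 : 0 < Mx * My := by
    by_contra h
    have h0 : Fintype.card (Fin Mx × Fin My) = 0 := by omega
    have h1 := hp.2
    rw [Finset.univ_eq_empty_iff.mpr (Fintype.card_eq_zero_iff.mp h0),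
      Finset.sum_empty] at h1
    norm_num at h1
  set G : Set Ω := {ω | Vdist (empDist Z ω) p ≤ ε} with hG
  set Bad : Set Ω := {ω | ε < Vdist (empDist Z ω) p} with hBad
  -- the bad event has probability at most α
  have hbad : (μ Bad).toReal ≤ α := by
    rcases Nat.lt_or_ge (Mx * My) 2 with hM | hM
    · -- M = 1 : the empirical distribution always equals p
      have hM1 : Mx * My = 1 := by omega
      obtain ⟨a, ha⟩ := Finset.card_eq_one.mp
        (by rw [Finset.card_univ, hcard, hM1] :
          (Finset.univ : Finset (Fin Mx × Fin My)).card = 1)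
      have hBadempty : Bad = ∅ := by
        rw [Set.eq_empty_iff_forall_notMem]
        intro ω hω
        have h1 : ∑ b, empDist Z ω b = 1 := sum_empDist_univ hn Z ω
        have h2 := hp.2
        rw [ha, Finset.sum_singleton] at h1 h2
        have hV : Vdist (empDist Z ω) p = 0 := by
          rw [Vdist, ha, Finset.sum_singleton, h1, h2]
          simp
        rw [hBad, Set.mem_setOf_eq, hV] at hω
        linarith
      rw [hBadempty]
      simpa using hα0.le
    · -- M ≥ 2 : union bound + Chernoff
      have h2' : 1 < Fintype.card (Fin Mx × Fin My) := by rw [hcard]; omega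
      have hb := bad_bound hn hmeas hindep hp.1 hp.2 hdist hε0 h2'
      refine hb.trans (le_of_eq ?_)
      set c : ℝ := (2:ℝ) ^ (Mx * My) - 2 with hc
      have h2M : (2:ℕ) ≤ 2 ^ (Mx * My) := by
        calc (2:ℕ) = 2 ^ 1 := rfl
          _ ≤ 2 ^ (Mx * My) := Nat.pow_le_pow_right (by norm_num) (by omega)
      have hc2 : (2:ℝ) ≤ c := by
        have h4 : (4:ℝ) ≤ (2:ℝ) ^ (Mx * My) := by
          calc (4:ℝ) = 2 ^ 2 := by norm_num
            _ ≤ 2 ^ (Mx * My) := by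
                apply pow_le_pow_right₀ (by norm_num) (by omega)
        rw [hc]; linarith
      have hc0 : (0:ℝ) < c := by linarith
      have hcastc : ((2 ^ (Fintype.card (Fin Mx × Fin My)) - 2 : ℕ) : ℝ) = c := by
        rw [hcard, Nat.cast_sub h2M, hc]
        push_cast
        ring
      have hcα : 1 ≤ c / α := by
        rw [le_div_iff₀ hα0]; linarith
      have hlog0 : 0 ≤ Real.log (c / α) := Real.log_nonneg hcα
      have hn0 : (0:ℝ) < n := Nat.cast_pos.mpr hn
      have harg : 0 ≤ 2 / (n:ℝ) * Real.log (c / α) := by positivity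
      have hε2 : ε ^ 2 = 2 / (n:ℝ) * Real.log (c / α) := by
        rw [hε, Real.sq_sqrt harg]
      have hexp : -(n:ℝ) * ε ^ 2 / 2 = -Real.log (c / α) := by
        rw [hε2]; field_simp
      rw [hcastc, hexp, Real.exp_neg, Real.exp_log (by positivity), inv_div]
      field_simp
  -- on the good event, the confidence interval contains the mutual information
  have key : ∀ Es : Set Ω, G ⊆ Es → 1 - α ≤ (μ Es).toReal := by
    intro Es hsub
    have hmono : (μ G).toReal ≤ (μ Es).toReal :=
      (ENNReal.toReal_le_toReal (measure_ne_top _ _) (measure_ne_top _ _)).mpr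
        (measure_mono hsub)
    have huniv : (Set.univ : Set Ω) ⊆ G ∪ Bad := fun ω _ =>
      (le_or_gt (Vdist (empDist Z ω) p) ε).imp id id
    have hle : μ Set.univ ≤ μ G + μ Bad :=
      (measure_mono huniv).trans (measure_union_le G Bad)
    have h1 : (1:ℝ) ≤ (μ G).toReal + (μ Bad).toReal := by
      calc (1:ℝ) = (μ Set.univ).toReal := by simp
        _ ≤ (μ G + μ Bad).toReal :=
            (ENNReal.toReal_le_toReal (measure_ne_top _ _)
              (by simp [measure_ne_top])).mpr hle
        _ = (μ G).toReal + (μ Bad).toReal :=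
            ENNReal.toReal_add (measure_ne_top _ _) (measure_ne_top _ _)
    linarith
  refine key _ ?_
  intro ω hω
  have hVj : Vdist (empDist Z ω) p ≤ ε := hω
  have hVx : Vdist (margX (empDist Z ω)) (margX p) ≤ ε :=
    (Vdist_margX_le _ _).trans hVj
  have hVy : Vdist (margY (empDist Z ω)) (margY p) ≤ ε :=
    (Vdist_margY_le _ _).trans hVj
  have h1 := csInf_entSet_le (isDist_margX hp) hVx
  have h2 := csInf_entSet_le (isDist_margY hp) hVy
  have h3 := le_csSup_entSet hp hVj
  have h4 := le_csSup_entSet (isDist_margX hp) hVx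
  have h5 := le_csSup_entSet (isDist_margY hp) hVy
  have h6 := csInf_entSet_le hp hVj
  constructor
  · simp only [mutInfo]; linarith
  · simp only [mutInfo]; linarith
end

section
/- Let p and q be probability distributions on a finite set of size M ≥ 2. If ε satisfies V(p,q) ≤ ε ≤ 2 − 2/M, where V denotes variational distance, then |H(p) − H(q)| ≤ (ε/2)·log(M − 1) + ℋ(ε/2), where H denotes Shannon entropy and ℋ the binary entropy function (natural logarithms). -/
open scoped BigOperators

private lemma logsum {ι : Type*} (F : Finset ι) (c d : ι → ℝ) (hc : ∀ i ∈ F, 0 ≤ c i)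
    (hcd : ∀ i ∈ F, c i ≤ d i) :
    ∑ i ∈ F, c i * (Real.log (d i) - Real.log (c i)) ≤
      (∑ i ∈ F, c i) * (Real.log (∑ i ∈ F, d i) - Real.log (∑ i ∈ F, c i)) := by
  set C := ∑ i ∈ F, c i with hC
  set D := ∑ i ∈ F, d i with hD
  have hC0 : 0 ≤ C := Finset.sum_nonneg hc
  rcases eq_or_lt_of_le hC0 with h0 | hCpos
  · have : ∀ i ∈ F, c i = 0 :=
      (Finset.sum_eq_zero_iff_of_nonneg hc).mp h0.symm
    rw [Finset.sum_congr rfl (fun i hi => by rw [this i hi, zero_mul]), ← h0]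
    simp
  · have hDC : C ≤ D := Finset.sum_le_sum hcd
    have hDpos : 0 < D := lt_of_lt_of_le hCpos hDC
    have key : ∀ i ∈ F, c i * (Real.log (d i) - Real.log (c i)) ≤
        c i * (Real.log D - Real.log C) + (d i * C / D - c i) := by
      intro i hi
      rcases eq_or_lt_of_le (hc i hi) with h0 | hpos
      · rw [← h0]
        have : 0 ≤ d i * C / D := by
          have := le_trans (hc i hi) (hcd i hi)
          positivity
        simpa using this
      · have hd : 0 < d i := lt_of_lt_of_le hpos (hcd i hi)
        have hlog : Real.log (d i) - Real.log (c i) - (Real.log D - Real.log C)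
            = Real.log (d i * C / (c i * D)) := by
          rw [Real.log_div (by positivity) (by positivity), Real.log_mul (ne_of_gt hd)
            (ne_of_gt hCpos), Real.log_mul (ne_of_gt hpos) (ne_of_gt hDpos)]
          ring
        have hle : Real.log (d i * C / (c i * D)) ≤ d i * C / (c i * D) - 1 :=
          Real.log_le_sub_one_of_pos (by positivity)
        have := mul_le_mul_of_nonneg_left (hlog ▸ hle) (le_of_lt hpos)
        have heq : c i * (d i * C / (c i * D) - 1) = d i * C / D - c i := by
          field_simp
        linarith [heq ▸ this]
    calc ∑ i ∈ F, c i * (Real.log (d i) - Real.log (c i))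
        ≤ ∑ i ∈ F, (c i * (Real.log D - Real.log C) + (d i * C / D - c i)) :=
          Finset.sum_le_sum key
      _ = C * (Real.log D - Real.log C) + (D * C / D - C) := by
          rw [Finset.sum_add_distrib, ← Finset.sum_mul, Finset.sum_sub_distrib,
            ← Finset.sum_div, ← Finset.sum_mul]
      _ = C * (Real.log D - Real.log C) := by field_simp; ring

private lemma key_half {α : Type*} [Fintype α] (hM : 2 ≤ Fintype.card α)
    (p q : α → ℝ) (hp : IsDist p) (hq : IsDist q) :
    entropy p - entropy q ≤ Vdist p q / 2 * Real.log ((Fintype.card α : ℝ) - 1)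
      + binEnt (Vdist p q / 2) := by
  classical
  set M := Fintype.card α with hMdef
  set t : α → ℝ := fun a => min (p a) (q a) with ht
  set s : ℝ := ∑ a, t a with hsdef
  set T : ℝ := 1 - s with hTdef
  have ht0 : ∀ a, 0 ≤ t a := fun a => le_min (hp.1 a) (hq.1 a)
  have htp : ∀ a, t a ≤ p a := fun a => min_le_left _ _
  have htq : ∀ a, t a ≤ q a := fun a => min_le_right _ _
  have hVT : Vdist p q = 2 * T := by
    have h1 : ∀ a, |p a - q a| = p a + q a - 2 * t a := by
      intro a
      rcases le_total (p a) (q a) with h | h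
      · rw [abs_of_nonpos (by linarith), ht]; simp [min_eq_left h]; ring
      · rw [abs_of_nonneg (by linarith), ht]; simp [min_eq_right h]; ring
    have : Vdist p q = ∑ a, (p a + q a - 2 * t a) :=
      Finset.sum_congr rfl (fun a _ => h1 a)
    rw [this, Finset.sum_sub_distrib, Finset.sum_add_distrib, hp.2, hq.2,
      ← Finset.mul_sum, ← hsdef, hTdef]
    ring
  rw [hVT]
  have h2T : 2 * T / 2 = T := by ring
  rw [h2T]
  have hs0 : 0 ≤ s := Finset.sum_nonneg (fun a _ => ht0 a)
  have hs1 : s ≤ 1 := by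
    calc s ≤ ∑ a, p a := Finset.sum_le_sum (fun a _ => htp a)
    _ = 1 := hp.2
  have hT0 : 0 ≤ T := by rw [hTdef]; linarith
  rcases eq_or_lt_of_le hT0 with h0 | hTpos
  · -- T = 0 : p = q
    have hpq : p = q := by
      funext a
      have hz : ∑ a, |p a - q a| = 0 := by
        have := hVT; rw [← h0] at this
        simpa [Vdist] using this
      have := (Finset.sum_eq_zero_iff_of_nonneg
        (fun a _ => abs_nonneg (p a - q a))).mp hz a (Finset.mem_univ a)
      have := abs_eq_zero.mp this
      linarith
    rw [hpq, ← h0]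
    simp [binEnt]
  · -- main case : maximal coupling
    set w : α × α → ℝ := fun x =>
      (if x.1 = x.2 then t x.1 else 0) + (p x.1 - t x.1) * (q x.2 - t x.2) / T with hw
    have hpt : ∀ a, 0 ≤ p a - t a := fun a => sub_nonneg.2 (htp a)
    have hqt : ∀ a, 0 ≤ q a - t a := fun a => sub_nonneg.2 (htq a)
    have hprod : ∀ a, (p a - t a) * (q a - t a) = 0 := by
      intro a
      rcases le_total (p a) (q a) with h | h
      · rw [ht]; simp [min_eq_left h]
      · rw [ht]; simp [min_eq_right h]
    have hw0 : ∀ x, 0 ≤ w x := by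
      intro x
      rw [hw]
      have h1 : 0 ≤ (if x.1 = x.2 then t x.1 else 0) := by
        split <;> simp [ht0]
      have h2 : 0 ≤ (p x.1 - t x.1) * (q x.2 - t x.2) / T :=
        div_nonneg (mul_nonneg (hpt _) (hqt _)) hTpos.le
      exact add_nonneg h1 h2
    have hsq : ∑ a, (q a - t a) = T := by
      rw [Finset.sum_sub_distrib, hq.2, ← hsdef, hTdef]
    have hsp : ∑ a, (p a - t a) = T := by
      rw [Finset.sum_sub_distrib, hp.2, ← hsdef, hTdef]
    have hrow : ∀ a, ∑ b, w (a, b) = p a := by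
      intro a
      have : ∑ b, w (a, b) = (∑ b, if a = b then t a else 0)
          + ∑ b, (p a - t a) * (q b - t b) / T := by
        rw [← Finset.sum_add_distrib]
      rw [this, Finset.sum_ite_eq]
      simp only [Finset.mem_univ, if_true]
      have : ∑ b, (p a - t a) * (q b - t b) / T = (p a - t a) := by
        rw [← Finset.sum_div, ← Finset.mul_sum, hsq,
          mul_div_assoc, div_self (ne_of_gt hTpos), mul_one]
      rw [this]; ring
    have hcol : ∀ b, ∑ a, w (a, b) = q b := by
      intro b
      have : ∑ a, w (a, b) = (∑ a, if a = b then t a else 0)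
          + ∑ a, (p a - t a) * (q b - t b) / T := by
        rw [← Finset.sum_add_distrib]
      rw [this, Finset.sum_ite_eq']
      simp only [Finset.mem_univ, if_true]
      have : ∑ a, (p a - t a) * (q b - t b) / T = (q b - t b) := by
        rw [← Finset.sum_div, ← Finset.sum_mul, hsp]
        rw [mul_comm, mul_div_assoc, div_self (ne_of_gt hTpos), mul_one]
      rw [this]; ring
    have hwp : ∀ x : α × α, w x ≤ p x.1 := by
      intro x
      have := Finset.single_le_sum (f := fun b => w (x.1, b))
        (fun b _ => hw0 _) (Finset.mem_univ x.2)
      rw [hrow] at this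
      simpa using this
    have hwq : ∀ x : α × α, w x ≤ q x.2 := by
      intro x
      have := Finset.single_le_sum (f := fun a => w (a, x.2))
        (fun a _ => hw0 _) (Finset.mem_univ x.1)
      rw [hcol] at this
      simpa using this
    have hdiag : ∀ a, w (a, a) = t a := by
      intro a
      rw [hw]
      simp [hprod a]
    -- step A
    have stepA : ∑ x : α × α, w x * Real.log (w x) ≤ ∑ a, p a * Real.log (p a) := by
      have hrewrite : ∑ a, p a * Real.log (p a) = ∑ x : α × α, w x * Real.log (p x.1) := by
        rw [Fintype.sum_prod_type]
        refine Finset.sum_congr rfl (fun a _ => ?_)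
        show p a * Real.log (p a) = ∑ b, w (a, b) * Real.log (p a)
        rw [← Finset.sum_mul, hrow]
      rw [hrewrite]
      apply Finset.sum_le_sum
      intro x _
      rcases eq_or_lt_of_le (hw0 x) with h0 | hpos
      · rw [← h0]; simp
      · exact mul_le_mul_of_nonneg_left (Real.log_le_log hpos (hwp x)) (hw0 x)
    -- step C
    have stepC : ∑ x : α × α, w x * Real.log (q x.2) = ∑ b, q b * Real.log (q b) := by
      rw [Fintype.sum_prod_type_right]
      refine Finset.sum_congr rfl (fun b _ => ?_)
      show ∑ a, w (a, b) * Real.log (q b) = q b * Real.log (q b)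
      rw [← Finset.sum_mul, hcol]
    -- diagonal reindexing
    have hdiagsum : ∀ f : α × α → ℝ,
        ∑ x ∈ Finset.univ.filter (fun x : α × α => x.1 = x.2), f x = ∑ a, f (a, a) := by
      intro f
      rw [Finset.sum_filter, Fintype.sum_prod_type]
      exact Finset.sum_congr rfl (fun a _ => by rw [Finset.sum_ite_eq]; simp)
    have hdiag_w : ∑ x ∈ Finset.univ.filter (fun x : α × α => x.1 = x.2), w x = s := by
      rw [hdiagsum]
      rw [hsdef]
      exact Finset.sum_congr rfl (fun a _ => hdiag a)
    have hdiag_q : ∑ x ∈ Finset.univ.filter (fun x : α × α => x.1 = x.2),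
        q x.2 = 1 := by
      rw [hdiagsum]; exact hq.2
    have htot : ∑ x : α × α, w x = 1 := by
      rw [Fintype.sum_prod_type]
      rw [Finset.sum_congr rfl (fun a _ => hrow a), hp.2]
    have htotq : ∑ x : α × α, q x.2 = (M : ℝ) := by
      rw [Fintype.sum_prod_type]
      simp [hq.2, hMdef, Finset.card_univ]
    have hoff_w : ∑ x ∈ Finset.univ.filter (fun x : α × α => ¬ x.1 = x.2), w x = T := by
      have := Finset.sum_filter_add_sum_filter_not Finset.univ
        (fun x : α × α => x.1 = x.2) w
      rw [hdiag_w, htot] at this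
      rw [hTdef]; linarith
    have hoff_q : ∑ x ∈ Finset.univ.filter (fun x : α × α => ¬ x.1 = x.2),
        q x.2 = (M : ℝ) - 1 := by
      have := Finset.sum_filter_add_sum_filter_not Finset.univ
        (fun x : α × α => x.1 = x.2) (fun x => q x.2)
      rw [hdiag_q, htotq] at this
      linarith
    -- step B
    have stepB : ∑ x : α × α, w x * (Real.log (q x.2) - Real.log (w x))
        ≤ T * Real.log ((M : ℝ) - 1) + binEnt T := by
      have hsplit := Finset.sum_filter_add_sum_filter_not Finset.univ
        (fun x : α × α => x.1 = x.2)
        (fun x => w x * (Real.log (q x.2) - Real.log (w x)))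
      have b1 := logsum (Finset.univ.filter (fun x : α × α => x.1 = x.2)) w
        (fun x => q x.2) (fun x _ => hw0 x) (fun x _ => hwq x)
      rw [hdiag_w, hdiag_q] at b1
      have b2 := logsum (Finset.univ.filter (fun x : α × α => ¬ x.1 = x.2)) w
        (fun x => q x.2) (fun x _ => hw0 x) (fun x _ => hwq x)
      rw [hoff_w, hoff_q] at b2
      have hse : (1 : ℝ) - T = s := by rw [hTdef]; ring
      have hfinal : s * (Real.log 1 - Real.log s)
          + T * (Real.log ((M : ℝ) - 1) - Real.log T)
          = T * Real.log ((M : ℝ) - 1) + binEnt T := by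
        rw [Real.log_one, binEnt, ← hse]
        ring
      linarith [hsplit, b1, b2]
    -- combine
    have expand : ∑ x : α × α, w x * (Real.log (q x.2) - Real.log (w x))
        = ∑ x : α × α, w x * Real.log (q x.2) - ∑ x : α × α, w x * Real.log (w x) := by
      rw [← Finset.sum_sub_distrib]
      exact Finset.sum_congr rfl (fun x _ => by ring)
    rw [entropy, entropy]
    linarith [stepA, stepB, stepC, expand]

/-- Ho–Yeung entropy-difference bound: for distributions `p, q` on a
finite set of size `M ≥ 2`, if `V(p,q) ≤ ε ≤ 2 - 2/M` then
`|H(p) - H(q)| ≤ (ε/2)·log(M-1) + ℋ(ε/2)`. -/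
theorem entropy_diff_le {α : Type*} [Fintype α] (hM : 2 ≤ Fintype.card α)
    (p q : α → ℝ) (hp : IsDist p) (hq : IsDist q)
    (ε : ℝ) (hVε : Vdist p q ≤ ε) (hε : ε ≤ 2 - 2 / (Fintype.card α : ℝ)) :
    |entropy p - entropy q| ≤
      ε / 2 * Real.log ((Fintype.card α : ℝ) - 1) + binEnt (ε / 2) := by
  have hV0 : 0 ≤ Vdist p q := Finset.sum_nonneg (fun a _ => abs_nonneg _)
  have hε0 : 0 ≤ ε := le_trans hV0 hVε
  have hMR : (2 : ℝ) ≤ (Fintype.card α : ℝ) := by exact_mod_cast hM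
  have hMinv : 2 / (Fintype.card α : ℝ) = 2 * (1 / (Fintype.card α : ℝ)) := by ring
  have hmem2 : ε / 2 ∈ Set.Icc (0 : ℝ) (1 - 1 / (Fintype.card α : ℝ)) :=
    ⟨by linarith, by rw [hMinv] at hε; linarith⟩
  have hmem1 : Vdist p q / 2 ∈ Set.Icc (0 : ℝ) (1 - 1 / (Fintype.card α : ℝ)) :=
    ⟨by linarith, by linarith [hmem2.2]⟩
  have hbe : ∀ x : ℝ, x * Real.log ((Fintype.card α : ℝ) - 1) + binEnt x
      = Real.qaryEntropy (Fintype.card α) x := by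
    intro x
    rw [Real.qaryEntropy, Real.binEntropy, binEnt, Real.log_inv, Real.log_inv]
    push_cast
    ring
  have hmono := (Real.qaryEntropy_strictMonoOn hM).monotoneOn hmem1 hmem2
    (by linarith : Vdist p q / 2 ≤ ε / 2)
  have hVqp : Vdist q p = Vdist p q := by
    simp [Vdist, abs_sub_comm]
  rw [abs_sub_le_iff]
  constructor
  · calc entropy p - entropy q
        ≤ Vdist p q / 2 * Real.log ((Fintype.card α : ℝ) - 1) + binEnt (Vdist p q / 2) :=
          key_half hM p q hp hq
      _ = Real.qaryEntropy (Fintype.card α) (Vdist p q / 2) := hbe _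
      _ ≤ Real.qaryEntropy (Fintype.card α) (ε / 2) := hmono
      _ = ε / 2 * Real.log ((Fintype.card α : ℝ) - 1) + binEnt (ε / 2) := (hbe _).symm
  · calc entropy q - entropy p
        ≤ Vdist q p / 2 * Real.log ((Fintype.card α : ℝ) - 1) + binEnt (Vdist q p / 2) :=
          key_half hM q p hq hp
      _ = Real.qaryEntropy (Fintype.card α) (Vdist p q / 2) := by rw [hVqp]; exact hbe _
      _ ≤ Real.qaryEntropy (Fintype.card α) (ε / 2) := hmono
      _ = ε / 2 * Real.log ((Fintype.card α : ℝ) - 1) + binEnt (ε / 2) := (hbe _).symm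
end
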